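/- Let ρ ∈ ℝ, c ≠ 0 and μ = 1/c. Let κ, G : I → ℝ be functions on an interval I such that: κ is continuously differentiable, nowhere zero, with κ'(s) ≠ 0 and cκ(s) ≠ 1 for all s; G is positive and twice differentiable; the function s ↦ (1/κ(s))·(G''(s) + G(s)(κ(s)² + ρ)) is differentiable with derivative κ'(s)·G(s) (the Gauss–Codazzi equation); and (cκ(s) − 1)·G''(s) = G(s)·(κ(s)² − ρ(cκ(s) − 1)) for all s (the constant astigmatism condition). Then there exists a constant C ≠ 0 with G(s) = C·(1 − μ/κ(s))·e^{μ/κ(s)} for all s ∈ I, and κ satisfies the Euler–Lagrange equation EL(μ,ρ): the function s ↦ (1 − μ/κ(s))·e^{μ/κ(s)} is twice differentiable and (d²/ds²)[(1 − μ/κ)e^{μ/κ}] + (ρ(1 − μ/κ) − μκ)·e^{μ/κ} = 0 on I. -/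

import Mathlib

open Real Filter

/-- The profile curve of a rotational surface of constant astigmatism `1/κ₁ − 1/κ₂ = c`
in a 3-space form of curvature `ρ` is a critical curve of the curvature energy
`Θ_μ(γ) = ∫ κ e^{μ/κ}` with `μ = 1/c`: if `κ` (the curvature of the arclength-parametrized
profile curve, with `κ ≠ 0`, `κ' ≠ 0`, `cκ ≠ 1`) and the positive, twice differentiable
function `G` (the length of the rotational Killing field) satisfy the Gauss–Codazzi
equation `(d/ds)[(1/κ)(G'' + G(κ² + ρ))] = κ'G` and the constant astigmatism condition
`(cκ − 1)G'' = G(κ² − ρ(cκ − 1))` on the interval `I`, then `G = C(1 − μ/κ)e^{μ/κ}` for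
some constant `C ≠ 0`, the function `(1 − μ/κ)e^{μ/κ}` is twice differentiable, and `κ`
satisfies the Euler–Lagrange equation `EL(μ,ρ)`. -/
theorem profile_curve_is_critical (ρ c : ℝ) (hc : c ≠ 0) (μ : ℝ) (hμ : μ = 1 / c)
    (I : Set ℝ) (hIopen : IsOpen I) (hIconn : I.OrdConnected)
    (κ G : ℝ → ℝ)
    (hκdiff : ∀ s ∈ I, DifferentiableAt ℝ κ s)
    (hκ'cont : ContinuousOn (deriv κ) I)
    (hκ0 : ∀ s ∈ I, κ s ≠ 0)
    (hκ'0 : ∀ s ∈ I, deriv κ s ≠ 0)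
    (hcκ : ∀ s ∈ I, c * κ s ≠ 1)
    (hGpos : ∀ s ∈ I, 0 < G s)
    (hG1 : ∀ s ∈ I, DifferentiableAt ℝ G s)
    (hG2 : ∀ s ∈ I, DifferentiableAt ℝ (deriv G) s)
    (hGC : ∀ s ∈ I,
      HasDerivAt (fun t => (1 / κ t) * (deriv (deriv G) t + G t * ((κ t) ^ 2 + ρ)))
        (deriv κ s * G s) s)
    (hCA : ∀ s ∈ I,
      (c * κ s - 1) * deriv (deriv G) s = G s * ((κ s) ^ 2 - ρ * (c * κ s - 1))) :
    (∃ C : ℝ, C ≠ 0 ∧ ∀ s ∈ I, G s = C * (1 - μ / κ s) * Real.exp (μ / κ s)) ∧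
    (∀ s ∈ I,
      DifferentiableAt ℝ (fun t => (1 - μ / κ t) * Real.exp (μ / κ t)) s ∧
      DifferentiableAt ℝ (deriv (fun t => (1 - μ / κ t) * Real.exp (μ / κ t))) s) ∧
    (∀ s ∈ I,
      deriv (deriv (fun t => (1 - μ / κ t) * Real.exp (μ / κ t))) s
        + (ρ * (1 - μ / κ s) - μ * κ s) * Real.exp (μ / κ s) = 0) := by
  have hconv : Convex ℝ I := convex_iff_ordConnected.mpr hIconn
  set f : ℝ → ℝ := fun t => (1 - μ / κ t) * Real.exp (μ / κ t) with hf_def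
  -- nonvanishing of 1 - μ/κ
  have hone : ∀ s ∈ I, 1 - μ / κ s ≠ 0 := by
    intro s hs h
    apply hcκ s hs
    have hκs := hκ0 s hs
    have h1 : μ / κ s = 1 := by linarith
    rw [div_eq_one_iff_eq hκs] at h1
    rw [← h1, hμ]
    field_simp
  have hfne : ∀ s ∈ I, f s ≠ 0 := fun s hs =>
    mul_ne_zero (hone s hs) (Real.exp_ne_zero _)
  -- Key first-order equation from Gauss-Codazzi + constant astigmatism
  have hG' : ∀ s ∈ I, c * deriv G s * κ s ^ 2 * (c * κ s - 1) = deriv κ s * G s := by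
    intro s hs
    have hκs := hκ0 s hs
    have hcκs : c * κ s - 1 ≠ 0 := sub_ne_zero.mpr (hcκ s hs)
    have hG := (hG1 s hs).hasDerivAt
    have hκH := (hκdiff s hs).hasDerivAt
    have hnum : HasDerivAt (fun t => c * G t * κ t ^ 2)
        (c * deriv G s * κ s ^ 2 + c * G s * (2 * κ s * deriv κ s)) s := by
      have h := (hG.const_mul c).fun_mul (hκH.fun_pow 2)
      refine h.congr_deriv ?_
      push_cast
      ring
    have hden : HasDerivAt (fun t => c * κ t - 1) (c * deriv κ s) s :=
      (hκH.const_mul c).sub_const 1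
    have hF2 : HasDerivAt (fun t => c * G t * κ t ^ 2 / (c * κ t - 1))
        (((c * deriv G s * κ s ^ 2 + c * G s * (2 * κ s * deriv κ s)) * (c * κ s - 1)
          - c * G s * κ s ^ 2 * (c * deriv κ s)) / (c * κ s - 1) ^ 2) s :=
      hnum.div hden hcκs
    have heq : (fun t => c * G t * κ t ^ 2 / (c * κ t - 1)) =ᶠ[nhds s]
        (fun t => (1 / κ t) * (deriv (deriv G) t + G t * ((κ t) ^ 2 + ρ))) := by
      filter_upwards [hIopen.mem_nhds hs] with t ht
      have hκt := hκ0 t ht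
      have hcκt : c * κ t - 1 ≠ 0 := sub_ne_zero.mpr (hcκ t ht)
      have h := hCA t ht
      field_simp
      linear_combination -h
    have hder := hF2.unique ((hGC s hs).congr_of_eventuallyEq heq)
    field_simp at hder
    linear_combination hder
  -- G / f has zero derivative on I
  have hGf : ∀ s ∈ I, HasDerivAt (fun t => G t / f t) 0 s := by
    intro s hs
    have hκs := hκ0 s hs
    have hcκs : c * κ s - 1 ≠ 0 := sub_ne_zero.mpr (hcκ s hs)
    have hκH := (hκdiff s hs).hasDerivAt
    have hu : HasDerivAt (fun t => μ / κ t) (-(μ * deriv κ s) / κ s ^ 2) s := by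
      have h := (hasDerivAt_const s μ).fun_div hκH hκs
      refine h.congr_deriv ?_
      ring
    have hexp : HasDerivAt (fun t => Real.exp (μ / κ t))
        (Real.exp (μ / κ s) * (-(μ * deriv κ s) / κ s ^ 2)) s :=
      by have := (Real.hasDerivAt_exp (μ / κ s)).comp s hu; exact this
    have h1 : HasDerivAt (fun t => 1 - μ / κ t) (-(-(μ * deriv κ s) / κ s ^ 2)) s := by
      have h := (hasDerivAt_const s (1 : ℝ)).fun_sub hu
      refine h.congr_deriv ?_
      ring
    have hfH : HasDerivAt f
        ((-(-(μ * deriv κ s) / κ s ^ 2)) * Real.exp (μ / κ s)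
          + (1 - μ / κ s) * (Real.exp (μ / κ s) * (-(μ * deriv κ s) / κ s ^ 2))) s :=
      h1.mul hexp
    have hGs := (hG1 s hs).hasDerivAt
    have hdiv := hGs.div hfH (hfne s hs)
    have hzero : (deriv G s * f s - G s *
        ((-(-(μ * deriv κ s) / κ s ^ 2)) * Real.exp (μ / κ s)
          + (1 - μ / κ s) * (Real.exp (μ / κ s) * (-(μ * deriv κ s) / κ s ^ 2)))) / f s ^ 2
        = 0 := by
      rw [div_eq_zero_iff]
      left
      have hkey := hG' s hs
      have hfs : f s = (1 - μ / κ s) * Real.exp (μ / κ s) := rfl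
      rw [hfs]
      rw [hμ, div_div]
      have hE := Real.exp_ne_zero (1 / (c * κ s))
      field_simp
      field_simp at hkey
      linear_combination (Real.exp (1 / (c * κ s))) * hkey
    rw [hzero] at hdiv
    exact hdiv
  rcases I.eq_empty_or_nonempty with rfl | ⟨s₀, hs₀⟩
  · exact ⟨⟨1, one_ne_zero, fun s hs => absurd hs (Set.notMem_empty s)⟩,
      fun s hs => absurd hs (Set.notMem_empty s),
      fun s hs => absurd hs (Set.notMem_empty s)⟩
  set C := G s₀ / f s₀ with hC
  have hCne : C ≠ 0 := div_ne_zero (hGpos s₀ hs₀).ne' (hfne s₀ hs₀)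
  have hconst : ∀ s ∈ I, G s / f s = C := by
    intro s hs
    have hdiff : DifferentiableOn ℝ (fun t => G t / f t) I :=
      fun t ht => ((hGf t ht).differentiableAt).differentiableWithinAt
    exact hconv.is_const_of_fderivWithin_eq_zero hdiff
      (fun t ht => by
        rw [fderivWithin_of_isOpen hIopen ht, (hGf t ht).hasFDerivAt.fderiv]
        exact ContinuousLinearMap.ext fun x => by simp) hs hs₀
  have hGeq : ∀ s ∈ I, G s = C * f s := by
    intro s hs
    rw [← hconst s hs, div_mul_cancel₀ _ (hfne s hs)]
  have hGeq' : ∀ s ∈ I, G s = C * (1 - μ / κ s) * Real.exp (μ / κ s) := by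
    intro s hs
    rw [hGeq s hs, hf_def, mul_assoc]
  -- f = G / C near each point of I
  have hfeqn : ∀ s ∈ I, f =ᶠ[nhds s] fun t => G t / C := by
    intro s hs
    filter_upwards [hIopen.mem_nhds hs] with t ht
    rw [hGeq t ht, mul_div_cancel_left₀ _ hCne]
  have hfd1 : ∀ s ∈ I, DifferentiableAt ℝ f s := fun s hs =>
    ((hG1 s hs).div_const C).congr_of_eventuallyEq (hfeqn s hs)
  have hdf : ∀ s ∈ I, deriv f s = deriv G s / C := by
    intro s hs
    rw [(hfeqn s hs).deriv_eq, deriv_div_const]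
  have hdfeqn : ∀ s ∈ I, deriv f =ᶠ[nhds s] fun t => deriv G t / C := by
    intro s hs
    filter_upwards [hIopen.mem_nhds hs] with t ht
    exact hdf t ht
  have hfd2 : ∀ s ∈ I, DifferentiableAt ℝ (deriv f) s := fun s hs =>
    ((hG2 s hs).div_const C).congr_of_eventuallyEq (hdfeqn s hs)
  have hd2 : ∀ s ∈ I, deriv (deriv f) s = deriv (deriv G) s / C := by
    intro s hs
    rw [(hdfeqn s hs).deriv_eq, deriv_div_const]
  refine ⟨⟨C, hCne, hGeq'⟩, fun s hs => ⟨hfd1 s hs, hfd2 s hs⟩, ?_⟩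
  intro s hs
  have hκs := hκ0 s hs
  have hcκs : c * κ s - 1 ≠ 0 := sub_ne_zero.mpr (hcκ s hs)
  have hCAs := hCA s hs
  have hGs := hGeq' s hs
  rw [hd2 s hs]
  have hG'' : deriv (deriv G) s = G s * ((κ s) ^ 2 - ρ * (c * κ s - 1)) / (c * κ s - 1) := by
    rw [eq_div_iff hcκs]
    linear_combination hCAs
  rw [hG'', hGs, hμ]
  have hE := Real.exp_ne_zero ((1 / c) / κ s)
  field_simp
  ring
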